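/- Let ψ be an entropy generator with ψ'(1) = 0 such that ψ' is concave on (0,1) and ψ' is convex on (1,∞). Then for every ρ ∈ (0,1) and every u ∈ (0,1]: ψ''(u/ρ) · (1/ρ) · (ρ − u)² ≥ ψ'(u/ρ) · (u − ρ). In particular, for n-state BGK models this yields condition (admissible-entropies) with μ = 2λ. -/

import Mathlib

open Real Set

/-- if `ψ` is an entropy generator with `ψ'(1) = 0`, `ψ'` concave on
`(0,1)` and `ψ'` convex on `(1,∞)`, then for all `ρ ∈ (0,1)` and `u ∈ (0,1]`,
`ψ''(u/ρ) (1/ρ) (ρ-u)² ≥ ψ'(u/ρ)(u-ρ)`. -/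
theorem stmt_7
    (ψ : ℝ → ℝ)
    (hψcont : ContinuousOn ψ (Ici 0))
    (hψsmooth : ContDiffOn ℝ 2 ψ (Ioi 0))
    (hψ1 : ψ 1 = 0)
    (hψnonneg : ∀ x ∈ Ici (0:ℝ), 0 ≤ ψ x)
    (hψ'' : ∀ x ∈ Ioi (0:ℝ), 0 ≤ deriv (deriv ψ) x)
    (hψ'1 : deriv ψ 1 = 0)
    (hconc : ConcaveOn ℝ (Ioo 0 1) (deriv ψ))
    (hconv : ConvexOn ℝ (Ioi 1) (deriv ψ)) :
    ∀ ρ ∈ Set.Ioo (0:ℝ) 1, ∀ u ∈ Set.Ioc (0:ℝ) 1,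
      deriv ψ (u / ρ) * (u - ρ) ≤ deriv (deriv ψ) (u / ρ) * (1 / ρ) * (ρ - u) ^ 2 := by
  set g := deriv ψ with hg
  have hg1 : ContDiffOn ℝ 1 g (Ioi 0) :=
    hψsmooth.deriv_of_isOpen (m := 1) isOpen_Ioi (by norm_num)
  have hgc : ContinuousOn g (Ioi 0) := hg1.continuousOn
  have hgd : ∀ x ∈ Ioi (0:ℝ), DifferentiableAt ℝ g x := fun x hx =>
    (hg1.differentiableOn one_ne_zero x hx).differentiableAt (isOpen_Ioi.mem_nhds hx)
  have hgcont1 : ContinuousAt g 1 :=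
    hgc.continuousAt (isOpen_Ioi.mem_nhds (by norm_num : (1:ℝ) ∈ Ioi 0))
  -- Key pointwise inequality: for all x > 0, g x * (x - 1) ≤ g' x * (x - 1)^2
  have key : ∀ x ∈ Ioi (0:ℝ), g x * (x - 1) ≤ deriv g x * (x - 1) ^ 2 := by
    intro x hx
    rcases lt_trichotomy x 1 with hx1 | hx1 | hx1
    · -- case x < 1 : use concavity on (0,1)
      have hxm : x ∈ Ioo (0:ℝ) 1 := ⟨hx, hx1⟩
      -- slope g x y ≤ deriv g x for x < y < 1; take y → 1⁻
      have hev : ∀ᶠ y in nhdsWithin 1 (Iio 1), (g y - g x) / (y - x) ≤ deriv g x := by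
        filter_upwards [Ioo_mem_nhdsLT_of_mem (show (1:ℝ) ∈ Ioc x 1 by
          exact ⟨hx1, le_rfl⟩)] with y hy
        have := hconc.slope_le_deriv hxm ⟨lt_trans hx hy.1, hy.2⟩ hy.1 (hgd x hx)
        rwa [slope_def_field] at this
      have htend : Filter.Tendsto (fun y => (g y - g x) / (y - x)) (nhdsWithin 1 (Iio 1))
          (nhds ((g 1 - g x) / (1 - x))) := by
        apply Filter.Tendsto.mono_left _ nhdsWithin_le_nhds
        exact (hgcont1.sub tendsto_const_nhds).div
          (Filter.Tendsto.sub_const Filter.tendsto_id x) (sub_ne_zero.mpr hx1.ne')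
      have hlim : (g 1 - g x) / (1 - x) ≤ deriv g x :=
        le_of_tendsto htend hev
      rw [hψ'1] at hlim
      have h1x : (0:ℝ) < 1 - x := by linarith
      rw [div_le_iff₀ h1x] at hlim
      nlinarith [sq_nonneg (x - 1)]
    · subst hx1; simp [hψ'1]
    · -- case x > 1 : use convexity on (1,∞)
      have hev : ∀ᶠ y in nhdsWithin 1 (Ioi 1), (g x - g y) / (x - y) ≤ deriv g x := by
        filter_upwards [Ioo_mem_nhdsGT_of_mem (show (1:ℝ) ∈ Ico 1 x by
          exact ⟨le_rfl, hx1⟩)] with y hy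
        have := hconv.slope_le_deriv hy.1 hx1 hy.2 (hgd x hx)
        have h' : (g x - g y) / (x - y) = slope g y x := by
          rw [slope_def_field]
        rw [h']; exact this
      have htend : Filter.Tendsto (fun y => (g x - g y) / (x - y)) (nhdsWithin 1 (Ioi 1))
          (nhds ((g x - g 1) / (x - 1))) := by
        apply Filter.Tendsto.mono_left _ nhdsWithin_le_nhds
        exact (tendsto_const_nhds.sub hgcont1).div
          ((tendsto_const_nhds.sub Filter.tendsto_id)) (sub_ne_zero.mpr hx1.ne')
      have hlim : (g x - g 1) / (x - 1) ≤ deriv g x := le_of_tendsto htend hev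
      rw [hψ'1] at hlim
      have hx1' : (0:ℝ) < x - 1 := by linarith
      rw [div_le_iff₀ hx1'] at hlim
      nlinarith [sq_nonneg (x - 1)]
  intro ρ hρ u hu
  have hρ0 : (0:ℝ) < ρ := hρ.1
  have hx : u / ρ ∈ Ioi (0:ℝ) := div_pos hu.1 hρ0
  have hkey := key _ hx
  have h2 : g (u/ρ) * (u - ρ) = ρ * (g (u/ρ) * (u/ρ - 1)) := by
    field_simp; try ring
  have h3 : deriv g (u/ρ) * (1/ρ) * (ρ - u)^2 = ρ * (deriv g (u/ρ) * (u/ρ - 1)^2) := by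
    field_simp; try ring
  rw [h2, h3]
  exact mul_le_mul_of_nonneg_left hkey hρ0.le
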